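/- arXiv:1510.08873 — 7 statements merged into one kernel-verified Lean document; each statement's English description precedes it below -/
import Mathlib

section
/- The function L(x) = (1 − F(x))·F''(x)/(F'(x))² satisfies lim_{x→∞} L(x) = −1; that is, F satisfies von Mises' condition for membership in the Gumbel maximal domain of attraction. -/
open Real Filter

/-- Von Mises' condition for the Tracy–Widom law (GOE): the function
`L(x) = (1 - F x) * F''(x) / (F'(x))^2` tends to `-1` as `x → ∞`. -/
theorem vonMises_condition_tracyWidom
    (F R : ℝ → ℝ)
    (hFdiff : Differentiable ℝ F)
    (hF'diff : Differentiable ℝ (deriv F))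
    (hFmono : StrictMono F)
    (hF0 : Tendsto F atBot (nhds 0))
    (hF1 : Tendsto F atTop (nhds 1))
    (hRdiff : Differentiable ℝ R)
    (hfactor : ∀ x, deriv F x = F x * R x)
    (htail : Tendsto (fun x : ℝ =>
        4 * Real.sqrt π * x ^ ((3:ℝ)/4) * Real.exp ((2/3) * x ^ ((3:ℝ)/2)) * (1 - F x))
      atTop (nhds 1))
    (hRtail : Tendsto (fun x : ℝ =>
        4 * Real.sqrt π * x ^ ((1:ℝ)/4) * Real.exp ((2/3) * x ^ ((3:ℝ)/2)) * R x)
      atTop (nhds 1))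
    (hR'tail : Tendsto (fun x : ℝ =>
        (4 * Real.sqrt π / x ^ ((1:ℝ)/4)) * Real.exp ((2/3) * x ^ ((3:ℝ)/2)) * deriv R x)
      atTop (nhds (-1))) :
    Tendsto (fun x : ℝ => (1 - F x) * deriv (deriv F) x / (deriv F x) ^ 2)
      atTop (nhds (-1)) := by
  have hπ : (0:ℝ) < Real.sqrt π := Real.sqrt_pos.mpr Real.pi_pos
  have hderiv2 : ∀ x, deriv (deriv F) x = F x * (R x)^2 + F x * deriv R x := by
    intro x
    have h1 : deriv F = fun y => F y * R y := funext hfactor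
    rw [h1, deriv_fun_mul (hFdiff x) (hRdiff x), hfactor]
    ring
  set A := fun x : ℝ => 4 * Real.sqrt π * x ^ ((3:ℝ)/4) * Real.exp ((2/3) * x ^ ((3:ℝ)/2)) * (1 - F x) with hA
  set B := fun x : ℝ => 4 * Real.sqrt π * x ^ ((1:ℝ)/4) * Real.exp ((2/3) * x ^ ((3:ℝ)/2)) * R x with hB
  set C := fun x : ℝ => (4 * Real.sqrt π / x ^ ((1:ℝ)/4)) * Real.exp ((2/3) * x ^ ((3:ℝ)/2)) * deriv R x with hC
  have h1 : Tendsto (fun x => (F x)⁻¹) atTop (nhds 1) := by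
    simpa using hF1.inv₀ one_ne_zero
  have h2 : Tendsto (fun x => 1 - F x) atTop (nhds 0) := by
    have := (tendsto_const_nhds (α := ℝ) (x := (1:ℝ))).sub hF1
    simpa using this
  have h3 : Tendsto (fun x => A x * C x / (B x)^2) atTop (nhds (-1)) := by
    have := (htail.mul hR'tail).div (hRtail.pow 2) (by norm_num)
    simp at this
    exact this
  have hmain : Tendsto (fun x => (F x)⁻¹ * ((1 - F x) + A x * C x / (B x)^2))
      atTop (nhds (-1)) := by
    have := h1.mul (h2.add h3)
    norm_num at this
    exact this
  refine hmain.congr' ?_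
  have hFpos : ∀ᶠ x in atTop, 0 < F x :=
    hF1.eventually (eventually_gt_nhds (by norm_num : (0:ℝ) < 1))
  have hBpos : ∀ᶠ x in atTop, 0 < B x :=
    hRtail.eventually (eventually_gt_nhds (by norm_num : (0:ℝ) < 1))
  filter_upwards [eventually_gt_atTop (0:ℝ), hFpos, hBpos] with x hx hFx hBx
  have he : 0 < Real.exp ((2/3) * x ^ ((3:ℝ)/2)) := Real.exp_pos _
  have hp : 0 < x ^ ((1:ℝ)/4) := Real.rpow_pos_of_pos hx _
  have hc : 0 < 4 * Real.sqrt π * x ^ ((1:ℝ)/4) * Real.exp ((2/3) * x ^ ((3:ℝ)/2)) := by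
    positivity
  have hRx : 0 < R x := by
    rcases mul_pos_iff.mp hBx with ⟨_, h⟩ | ⟨h, _⟩
    · exact h
    · linarith
  have hq : x ^ ((3:ℝ)/4) = (x ^ ((1:ℝ)/4))^3 := by
    rw [← Real.rpow_natCast (x ^ ((1:ℝ)/4)) 3, ← Real.rpow_mul hx.le]
    norm_num
  simp only [hA, hB, hC, hderiv2, hfactor, hq]
  field_simp
end

section
/- For every real y, (F(a_m·y + b_m))^m → exp(−e^{−y}) as m → ∞; equivalently, the maximum of m i.i.d. random variables with distribution function F, centered by b_m and scaled by a_m, converges in distribution to the standard Gumbel distribution. -/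
open Real Filter

lemma gumbel_aux_pow (g : ℕ → ℝ) (h0 : ∀ m, 0 < g m) (h1 : ∀ m, g m < 1) {t : ℝ}
    (H : Tendsto (fun m : ℕ => (m : ℝ) * (1 - g m)) atTop (nhds t)) :
    Tendsto (fun m => g m ^ m) atTop (nhds (Real.exp (-t))) := by
  have hu0 : Tendsto (fun m => 1 - g m) atTop (nhds 0) := by
    have h2 : Tendsto (fun m : ℕ => ((m : ℝ) * (1 - g m)) * ((m : ℝ))⁻¹) atTop (nhds (t * 0)) :=
      H.mul (tendsto_inv_atTop_zero.comp (tendsto_natCast_atTop_atTop : Tendsto (fun n : ℕ => (n:ℝ)) atTop atTop))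
    rw [mul_zero] at h2
    refine h2.congr' ?_
    filter_upwards [eventually_ge_atTop 1] with m hm
    have hm0 : (m : ℝ) ≠ 0 := Nat.cast_ne_zero.2 (by omega)
    field_simp
  have hd : HasDerivAt (fun u : ℝ => Real.log (1 - u)) (-1) 0 := by
    have h1' : HasDerivAt (fun u : ℝ => 1 - u) (0 - 1) 0 :=
      (hasDerivAt_const (0:ℝ) (1:ℝ)).sub (hasDerivAt_id 0)
    have h2' := (Real.hasDerivAt_log (by norm_num : (1:ℝ) - 0 ≠ 0)).comp 0 h1'
    exact h2'.congr_deriv (by norm_num)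
  have hslope : Tendsto (fun u : ℝ => Real.log (1 - u) / u) (nhdsWithin 0 {(0:ℝ)}ᶜ) (nhds (-1)) := by
    have := hasDerivAt_iff_tendsto_slope.mp hd
    refine this.congr' ?_
    filter_upwards [self_mem_nhdsWithin] with u hu
    simp [slope_def_field, div_eq_div_iff]
  have huin : Tendsto (fun m => 1 - g m) atTop (nhdsWithin 0 {(0:ℝ)}ᶜ) :=
    tendsto_nhdsWithin_of_tendsto_nhds_of_eventually_within _ hu0
      (Eventually.of_forall fun m => by
        have := h1 m
        simp only [Set.mem_compl_iff, Set.mem_singleton_iff]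
        intro hc
        have : (1:ℝ) - g m = 0 := hc
        linarith)
  have Hlog : Tendsto (fun m : ℕ => (m : ℝ) * Real.log (g m)) atTop (nhds (-t)) := by
    have hmul := H.mul (hslope.comp huin)
    rw [show t * (-1) = -t by ring] at hmul
    refine hmul.congr' ?_
    refine Eventually.of_forall fun m => ?_
    have hu : (1 : ℝ) - g m ≠ 0 := by have := h1 m; intro hc; linarith [sub_eq_zero.mp hc]
    have : (1:ℝ) - (1 - g m) = g m := by ring
    simp only [Function.comp, this]
    field_simp
  have hfin := (Real.continuous_exp.tendsto _).comp Hlog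
  refine hfin.congr ?_
  intro m
  simp only [Function.comp]
  rw [Real.exp_nat_mul, Real.exp_log (h0 m)]

/-- The maximum of `m` i.i.d. random variables with Tracy–Widom-type
distribution function `F`, centered by `b m` and scaled by `a m`, converges in
distribution to the standard Gumbel distribution: for every real `y`,
`(F (a m * y + b m))^m → exp (-exp (-y))` as `m → ∞`. -/
theorem max_tracyWidom_gumbel_attraction
    (F R : ℝ → ℝ) (a b : ℕ → ℝ)
    (hFdiff : Differentiable ℝ F)
    (hF'diff : Differentiable ℝ (deriv F))
    (hFmono : StrictMono F)
    (hF0 : Tendsto F atBot (nhds 0))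
    (hF1 : Tendsto F atTop (nhds 1))
    (hRdiff : Differentiable ℝ R)
    (hfactor : ∀ x, deriv F x = F x * R x)
    (htail : Tendsto (fun x : ℝ =>
        4 * Real.sqrt π * x ^ ((3:ℝ)/4) * Real.exp ((2/3) * x ^ ((3:ℝ)/2)) * (1 - F x))
      atTop (nhds 1))
    (hRtail : Tendsto (fun x : ℝ =>
        4 * Real.sqrt π * x ^ ((1:ℝ)/4) * Real.exp ((2/3) * x ^ ((3:ℝ)/2)) * R x)
      atTop (nhds 1))
    (hR'tail : Tendsto (fun x : ℝ =>
        (4 * Real.sqrt π / x ^ ((1:ℝ)/4)) * Real.exp ((2/3) * x ^ ((3:ℝ)/2)) * deriv R x)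
      atTop (nhds (-1)))
    (hb : ∀ m : ℕ, 2 ≤ m → F (b m) = 1 - 1 / m)
    (ha : ∀ m : ℕ, 2 ≤ m → a m = 1 / (m * deriv F (b m))) :
    ∀ y : ℝ, Tendsto (fun m : ℕ => (F (a m * y + b m)) ^ m)
      atTop (nhds (Real.exp (-Real.exp (-y)))) := by
  intro y
  -- basic bounds on F
  have hFle1 : ∀ x, F x ≤ 1 := fun x =>
    ge_of_tendsto hF1 (eventually_atTop.2 ⟨x, fun t ht => hFmono.monotone ht⟩)
  have hFlt1 : ∀ x, F x < 1 := fun x => lt_of_lt_of_le (hFmono (lt_add_one x)) (hFle1 _)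
  have hF0le : ∀ x, 0 ≤ F x := fun x =>
    le_of_tendsto hF0 (eventually_atBot.2 ⟨x, fun t ht => hFmono.monotone ht⟩)
  have hFpos : ∀ x, 0 < F x := fun x =>
    lt_of_le_of_lt (hF0le (x - 1)) (hFmono (by linarith))
  have h1F : ∀ x, 0 < 1 - F x := fun x => by linarith [hFlt1 x]
  -- the hazard function
  set haz : ℝ → ℝ := fun x => deriv F x / (1 - F x) with haz_def
  -- step 1 : haz x / sqrt x → 1
  have L1 : Tendsto (fun x => haz x / Real.sqrt x) atTop (nhds 1) := by
    have hmain : Tendsto (fun x : ℝ => F x *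
        ((4 * Real.sqrt π * x ^ ((1:ℝ)/4) * Real.exp ((2/3) * x ^ ((3:ℝ)/2)) * R x) /
          (4 * Real.sqrt π * x ^ ((3:ℝ)/4) * Real.exp ((2/3) * x ^ ((3:ℝ)/2)) * (1 - F x))))
        atTop (nhds (1 * (1 / 1))) := hF1.mul (hRtail.div htail one_ne_zero)
    norm_num at hmain
    refine hmain.congr' ?_
    filter_upwards [eventually_ge_atTop 1] with x hx
    have hx0 : (0:ℝ) < x := by linarith
    have hsp : (0:ℝ) < Real.sqrt π := Real.sqrt_pos.2 Real.pi_pos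
    have he : (0:ℝ) < Real.exp ((2/3) * x ^ ((3:ℝ)/2)) := Real.exp_pos _
    have h14 : (0:ℝ) < x ^ ((1:ℝ)/4) := Real.rpow_pos_of_pos hx0 _
    have h12 : (0:ℝ) < x ^ ((1:ℝ)/2) := Real.rpow_pos_of_pos hx0 _
    have hs : Real.sqrt x = x ^ ((1:ℝ)/2) := Real.sqrt_eq_rpow x
    have hkey : x ^ ((3:ℝ)/4) = x ^ ((1:ℝ)/2) * x ^ ((1:ℝ)/4) := by
      rw [← Real.rpow_add hx0]; norm_num
    rw [hkey, haz_def]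
    simp only
    rw [hfactor x, hs]
    have hF1x := h1F x
    field_simp
  -- step 2 : b m → ∞
  have hbtop : Tendsto b atTop atTop := by
    rw [tendsto_atTop]
    intro M
    have h1m : Tendsto (fun m : ℕ => 1 - 1 / (m : ℝ)) atTop (nhds 1) := by
      have := tendsto_inv_atTop_zero.comp
        (tendsto_natCast_atTop_atTop : Tendsto (fun n : ℕ => (n : ℝ)) atTop atTop)
      have h2 := tendsto_const_nhds.sub (f := fun _ : ℕ => (1:ℝ)) this
      simpa [one_div] using h2
    filter_upwards [h1m.eventually (eventually_gt_nhds (hFlt1 M)), eventually_ge_atTop 2]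
      with m h1 h2
    have : F M < F (b m) := by rw [hb m h2]; exact h1
    exact (hFmono.lt_iff_lt.1 this).le
  have hL1b : Tendsto (fun m => haz (b m) / Real.sqrt (b m)) atTop (nhds 1) := L1.comp hbtop
  have hbpos : ∀ᶠ m in atTop, 1 ≤ b m := hbtop.eventually_ge_atTop 1
  -- positivity of hazard at b m
  have hhalf : ∀ᶠ m in atTop, 1/2 < haz (b m) / Real.sqrt (b m) :=
    hL1b.eventually (eventually_gt_nhds (by norm_num))
  have hhazb_pos : ∀ᶠ m in atTop, 0 < haz (b m) := by
    filter_upwards [hhalf, hbpos] with m h1 h2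
    have hsq : (0:ℝ) < Real.sqrt (b m) := Real.sqrt_pos.2 (by linarith)
    have : haz (b m) = haz (b m) / Real.sqrt (b m) * Real.sqrt (b m) :=
      (div_mul_cancel₀ _ hsq.ne').symm
    rw [this]
    exact mul_pos (by linarith) hsq
  -- hazard at b m tends to infinity
  have hhazb_top : Tendsto (fun m => haz (b m)) atTop atTop := by
    have hsqtop : Tendsto (fun m => Real.sqrt (b m)) atTop atTop := by
      have h' : Tendsto (fun x : ℝ => x ^ ((1:ℝ)/2)) atTop atTop :=
        tendsto_rpow_atTop (by norm_num)
      refine Tendsto.congr' ?_ (h'.comp hbtop)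
      filter_upwards [hbpos] with m hm
      exact (Real.sqrt_eq_rpow (b m)).symm
    have := Tendsto.pos_mul_atTop one_pos hL1b hsqtop
    refine this.congr' ?_
    filter_upwards [hbpos] with m hm
    have hsq : (0:ℝ) < Real.sqrt (b m) := Real.sqrt_pos.2 (by linarith)
    exact div_mul_cancel₀ _ hsq.ne'
  -- a m = (haz (b m))⁻¹ eventually
  have ha_eq : ∀ᶠ m in atTop, a m = (haz (b m))⁻¹ := by
    filter_upwards [eventually_ge_atTop 2] with m hm
    have h1Fb : (1:ℝ) - F (b m) = 1 / m := by rw [hb m hm]; ring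
    rw [ha m hm, haz_def]
    simp only
    rw [h1Fb, inv_div, div_div]
  have ha0 : Tendsto a atTop (nhds 0) := by
    have := hhazb_top.inv_tendsto_atTop
    exact Tendsto.congr' (by filter_upwards [ha_eq] with m hm; exact hm.symm) this
  have ha_pos : ∀ᶠ m in atTop, 0 < a m := by
    filter_upwards [ha_eq, hhazb_pos] with m h1 h2
    rw [h1]; exact inv_pos.2 h2
  -- the function G
  set G : ℝ → ℝ := fun x => -Real.log (1 - F x) with G_def
  have hGderiv : ∀ x, HasDerivAt G (haz x) x := by
    intro x
    have h1' : HasDerivAt (fun z => 1 - F z) (0 - deriv F x) x :=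
      (hasDerivAt_const x (1:ℝ)).sub (hFdiff x).hasDerivAt
    have h2' := (Real.hasDerivAt_log (h1F x).ne').comp x h1'
    have h3' := h2'.neg
    refine h3'.congr_deriv ?_
    rw [haz_def]
    field_simp
    ring
  have hGcont : Continuous G := by
    have : Differentiable ℝ G := fun x => (hGderiv x).differentiableAt
    exact this.continuous
  -- claim C : G (a m y + b m) - G (b m) → y
  have claimC : Tendsto (fun m => G (a m * y + b m) - G (b m)) atTop (nhds y) := by
    rcases eq_or_ne y 0 with hy | hy
    · subst hy
      simpa using (tendsto_const_nhds : Tendsto (fun _ : ℕ => (0:ℝ)) atTop (nhds 0))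
    · -- y ≠ 0 : mean value theorem argument
      have hay0 : Tendsto (fun m => a m * y) atTop (nhds 0) := by
        simpa using ha0.mul_const y
      have habs : Tendsto (fun m => |a m * y|) atTop (nhds 0) := by
        simpa using hay0.abs
      have hsmall : ∀ᶠ m in atTop, |a m * y| ≤ 1 :=
        habs.eventually (eventually_le_nhds (by norm_num))
      have hQ : ∀ᶠ m in atTop, ∃ c, |c - b m| ≤ |a m * y| ∧
          G (a m * y + b m) - G (b m) = (a m * y) * haz c := by
        filter_upwards [ha_pos] with m ham
        rcases lt_or_gt_of_ne hy with hy' | hy'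
        · have hlt : a m * y + b m < b m := by nlinarith
          obtain ⟨c, hc, hceq⟩ := exists_hasDerivAt_eq_slope G haz hlt
            hGcont.continuousOn (fun z _ => hGderiv z)
          have hne : b m - (a m * y + b m) ≠ 0 := by intro hcon; nlinarith
          have E : haz c * (b m - (a m * y + b m)) = G (b m) - G (a m * y + b m) :=
            (eq_div_iff hne).1 hceq
          refine ⟨c, ?_, by linear_combination E⟩
          rw [abs_of_neg (sub_neg.2 hc.2), abs_of_neg (by nlinarith : a m * y < 0)]
          linarith [hc.1]
        · have hlt : b m < a m * y + b m := by nlinarith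
          obtain ⟨c, hc, hceq⟩ := exists_hasDerivAt_eq_slope G haz hlt
            hGcont.continuousOn (fun z _ => hGderiv z)
          have hne : a m * y + b m - b m ≠ 0 := by intro hcon; nlinarith
          have E : haz c * (a m * y + b m - b m) = G (a m * y + b m) - G (b m) :=
            (eq_div_iff hne).1 hceq
          refine ⟨c, ?_, by linear_combination -E⟩
          rw [abs_of_pos (sub_pos.2 hc.1), abs_of_pos (by nlinarith : 0 < a m * y)]
          linarith [hc.2]
      classical
      set Q : ℕ → Prop := fun m => ∃ c, |c - b m| ≤ |a m * y| ∧
          G (a m * y + b m) - G (b m) = (a m * y) * haz c with Q_def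
      set ξ : ℕ → ℝ := fun m => if hm : Q m then hm.choose else b m with ξ_def
      have hξspec : ∀ᶠ m in atTop, |ξ m - b m| ≤ |a m * y| ∧
          G (a m * y + b m) - G (b m) = (a m * y) * haz (ξ m) := by
        filter_upwards [hQ] with m hm
        have hQm : Q m := hm
        have hx : ξ m = hQm.choose := by rw [ξ_def]; simp [hQm]
        rw [hx]
        exact hQm.choose_spec
      have hξtop : Tendsto ξ atTop atTop := by
        have hlow : Tendsto (fun m => b m + (-1 : ℝ)) atTop atTop :=
          tendsto_atTop_add_const_right atTop (-1) hbtop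
        refine tendsto_atTop_mono' atTop ?_ hlow
        filter_upwards [hξspec, hsmall] with m h1 h2
        have h3 := (abs_le.1 (h1.1.trans h2)).1
        linarith
      have hq0 : Tendsto (fun m => |a m * y| / b m) atTop (nhds 0) := by
        have := habs.mul hbtop.inv_tendsto_atTop
        simpa [div_eq_mul_inv] using this
      have hratio : Tendsto (fun m => ξ m / b m) atTop (nhds 1) := by
        have hlower : Tendsto (fun m => 1 - |a m * y| / b m) atTop (nhds 1) := by
          simpa using tendsto_const_nhds.sub hq0
        have hupper : Tendsto (fun m => 1 + |a m * y| / b m) atTop (nhds 1) := by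
          simpa using tendsto_const_nhds.add hq0
        refine tendsto_of_tendsto_of_tendsto_of_le_of_le' hlower hupper ?_ ?_
        · filter_upwards [hξspec, hbpos] with m h1 h2
          have hb0 : (0:ℝ) < b m := by linarith
          have h3 := (abs_le.1 h1.1).1
          have h5 : 1 - |a m * y| / b m = (b m - |a m * y|) / b m := by field_simp
          rw [h5]
          gcongr
          linarith
        · filter_upwards [hξspec, hbpos] with m h1 h2
          have hb0 : (0:ℝ) < b m := by linarith
          have h3 := (abs_le.1 h1.1).2
          have h5 : 1 + |a m * y| / b m = (b m + |a m * y|) / b m := by field_simp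
          rw [h5]
          gcongr
          linarith
      have P1 : Tendsto (fun m => haz (ξ m) / Real.sqrt (ξ m)) atTop (nhds 1) := L1.comp hξtop
      have P2 : Tendsto (fun m => Real.sqrt (ξ m) / Real.sqrt (b m)) atTop (nhds 1) := by
        have hsq : Tendsto (fun m => Real.sqrt (ξ m / b m)) atTop (nhds 1) := by
          have := (Real.continuous_sqrt.tendsto 1).comp hratio
          simpa [Function.comp_def] using this
        refine hsq.congr' ?_
        filter_upwards [hξtop.eventually_ge_atTop 0] with m hm
        exact Real.sqrt_div hm _
      have P3 : Tendsto (fun m => Real.sqrt (b m) / haz (b m)) atTop (nhds 1) := by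
        have := hL1b.inv₀ one_ne_zero
        simpa [inv_div] using this
      have Pfull : Tendsto (fun m => haz (ξ m) / haz (b m)) atTop (nhds 1) := by
        have hmul := (P1.mul P2).mul P3
        norm_num at hmul
        refine hmul.congr' ?_
        filter_upwards [hξtop.eventually_ge_atTop 1, hbpos, hhazb_pos] with m h1 h2 h3
        have s1 : (0:ℝ) < Real.sqrt (ξ m) := Real.sqrt_pos.2 (by linarith)
        have s2 : (0:ℝ) < Real.sqrt (b m) := Real.sqrt_pos.2 (by linarith)
        field_simp
      have hfin : Tendsto (fun m => y * (haz (ξ m) / haz (b m))) atTop (nhds (y * 1)) :=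
        tendsto_const_nhds.mul Pfull
      rw [mul_one] at hfin
      refine hfin.congr' ?_
      filter_upwards [hξspec, ha_eq, hhazb_pos] with m h1 h2 h3
      rw [h1.2, h2]
      field_simp
  -- conclude
  have hexp : Tendsto (fun m => Real.exp (-(G (a m * y + b m) - G (b m)))) atTop
      (nhds (Real.exp (-y))) := (Real.continuous_exp.tendsto _).comp claimC.neg
  have Hlim : Tendsto (fun m : ℕ => (m : ℝ) * (1 - F (a m * y + b m))) atTop
      (nhds (Real.exp (-y))) := by
    refine hexp.congr' ?_
    filter_upwards [eventually_ge_atTop 2] with m hm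
    have hm0 : (0:ℝ) < m := by exact_mod_cast Nat.cast_pos.2 (by omega)
    have e1 : G (b m) = Real.log m := by
      rw [G_def]
      simp only
      rw [show (1:ℝ) - F (b m) = 1 / m by rw [hb m hm]; ring, one_div, Real.log_inv, neg_neg]
    have e2 : Real.exp (-(G (a m * y + b m))) = 1 - F (a m * y + b m) := by
      rw [G_def]
      simp only [neg_neg]
      exact Real.exp_log (h1F _)
    rw [neg_sub, sub_eq_add_neg, Real.exp_add, e1, Real.exp_log hm0, e2]
  exact gumbel_aux_pow _ (fun m => hFpos _) (fun m => hFlt1 _) Hlim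
end

section
/- The normalizing constants b_m satisfy b_m / [ (3/4)·log(m²/(12π)) ]^{2/3} → 1 as m → ∞. -/
open Real Filter

/-- The Gumbel normalizing constants `b m` for the Tracy–Widom law satisfy
`b m / ((3/4) * log (m^2 / (12π)))^(2/3) → 1` as `m → ∞`. -/
theorem bm_asymptotic
    (F : ℝ → ℝ) (b : ℕ → ℝ)
    (hFcont : Continuous F)
    (hFmono : StrictMono F)
    (hF0 : Tendsto F atBot (nhds 0))
    (hF1 : Tendsto F atTop (nhds 1))
    (htail : Tendsto (fun x : ℝ =>
        4 * Real.sqrt π * x ^ ((3:ℝ)/4) * Real.exp ((2/3) * x ^ ((3:ℝ)/2)) * (1 - F x))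
      atTop (nhds 1))
    (hb : ∀ m : ℕ, 2 ≤ m → F (b m) = 1 - 1 / m) :
    Tendsto (fun m : ℕ =>
        b m / ((3/4) * Real.log ((m : ℝ) ^ 2 / (12 * π))) ^ ((2:ℝ)/3))
      atTop (nhds 1) := by
  have key : ∀ t w L : ℝ, w ≠ 0 → t/w*(w/L) = t/L := by
    intro t w L hw
    rw [div_mul_div_comm, mul_comm w L, mul_div_mul_right _ _ hw]
  have hπ : (0:ℝ) < π := Real.pi_pos
  have hsqrtπ : (0:ℝ) < Real.sqrt π := Real.sqrt_pos.2 hπ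
  have hFlt : ∀ x, F x < 1 := fun x =>
    lt_of_lt_of_le (hFmono (lt_add_one x)) (hFmono.monotone.ge_of_tendsto hF1 (x + 1))
  have hm2 : ∀ᶠ m : ℕ in atTop, 2 ≤ m := eventually_ge_atTop 2
  -- b tends to atTop
  have hbtop : Tendsto b atTop atTop := by
    rw [tendsto_atTop]
    intro M
    have h1 : ∀ᶠ m : ℕ in atTop, 1 / (m:ℝ) < 1 - F M :=
      tendsto_one_div_atTop_nhds_zero_nat.eventually_lt_const (by linarith [hFlt M])
    filter_upwards [h1, hm2] with m h1 h2
    have : F M < F (b m) := by rw [hb m h2]; linarith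
    exact (hFmono.lt_iff_lt.mp this).le
  have hbpos : ∀ᶠ m : ℕ in atTop, 0 < b m := hbtop.eventually_gt_atTop 0
  -- composed tail
  have hg : Tendsto (fun m : ℕ =>
      4 * Real.sqrt π * (b m) ^ ((3:ℝ)/4) * Real.exp ((2/3) * (b m) ^ ((3:ℝ)/2)) * (1/(m:ℝ)))
      atTop (nhds 1) := by
    refine (htail.comp hbtop).congr' ?_
    filter_upwards [hm2] with m h2
    simp only [Function.comp_apply]
    rw [hb m h2]; ring_nf
  -- take logs
  have hloglim : Tendsto (fun m : ℕ =>
      Real.log (4 * Real.sqrt π) + (3/4) * Real.log (b m)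
        + (2/3) * (b m) ^ ((3:ℝ)/2) - Real.log m) atTop (nhds 0) := by
    have h := (Real.continuousAt_log one_ne_zero).tendsto.comp hg
    rw [Real.log_one] at h
    refine h.congr' ?_
    filter_upwards [hbpos, hm2] with m hbm h2
    have hm0 : (0:ℝ) < m := by positivity
    simp only [Function.comp_apply]
    rw [Real.log_mul (by positivity) (by positivity),
        Real.log_mul (by positivity) (by positivity),
        Real.log_mul (by positivity) (by positivity),
        Real.log_rpow hbm, Real.log_exp, one_div, Real.log_inv]
    ring
  -- t m := b m ^ (3/2) → atTop
  have httop : Tendsto (fun m : ℕ => (b m) ^ ((3:ℝ)/2)) atTop atTop :=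
    (tendsto_rpow_atTop (by norm_num : (0:ℝ) < 3/2)).comp hbtop
  have htpos : ∀ᶠ m : ℕ in atTop, 0 < (b m) ^ ((3:ℝ)/2) := httop.eventually_gt_atTop 0
  have hlogm_top : Tendsto (fun m : ℕ => Real.log m) atTop atTop :=
    Real.tendsto_log_atTop.comp tendsto_natCast_atTop_atTop
  have hlogmpos : ∀ᶠ m : ℕ in atTop, 0 < Real.log m := hlogm_top.eventually_gt_atTop 0
  -- w m := (2/3) t m + (1/2) log (t m);  w - log m → -log(4√π)
  have hw : Tendsto (fun m : ℕ =>
      ((2/3) * (b m) ^ ((3:ℝ)/2) + (1/2) * Real.log ((b m) ^ ((3:ℝ)/2))) - Real.log m)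
      atTop (nhds (-Real.log (4 * Real.sqrt π))) := by
    have h := hloglim.sub (tendsto_const_nhds (x := Real.log (4 * Real.sqrt π)))
    rw [zero_sub] at h
    refine h.congr' ?_
    filter_upwards [hbpos] with m hbm
    rw [Real.log_rpow hbm]
    ring
  -- w → atTop, hence eventually positive
  have hwtop : Tendsto (fun m : ℕ =>
      (2/3) * (b m) ^ ((3:ℝ)/2) + (1/2) * Real.log ((b m) ^ ((3:ℝ)/2))) atTop atTop := by
    have := hw.add_atTop hlogm_top
    refine this.congr fun m => by ring
  have hwpos : ∀ᶠ m : ℕ in atTop, 0 <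
      (2/3) * (b m) ^ ((3:ℝ)/2) + (1/2) * Real.log ((b m) ^ ((3:ℝ)/2)) :=
    hwtop.eventually_gt_atTop 0
  -- w / log m → 1
  have hwL : Tendsto (fun m : ℕ =>
      ((2/3) * (b m) ^ ((3:ℝ)/2) + (1/2) * Real.log ((b m) ^ ((3:ℝ)/2))) / Real.log m)
      atTop (nhds 1) := by
    have h0 : Tendsto (fun m : ℕ =>
        (((2/3) * (b m) ^ ((3:ℝ)/2) + (1/2) * Real.log ((b m) ^ ((3:ℝ)/2))) - Real.log m)
          * (Real.log m)⁻¹ + 1) atTop (nhds (-Real.log (4 * Real.sqrt π) * 0 + 1)) :=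
      (hw.mul (tendsto_inv_atTop_zero.comp hlogm_top)).add tendsto_const_nhds
    rw [mul_zero, zero_add] at h0
    refine h0.congr' ?_
    filter_upwards [hlogmpos] with m hL
    field_simp
    ring
  -- log x / x → 0 at top
  have hlogdiv : Tendsto (fun x : ℝ => Real.log x / x) atTop (nhds 0) := by
    have := (isLittleO_log_rpow_atTop one_pos).tendsto_div_nhds_zero
    refine this.congr fun x => by rw [Real.rpow_one]
  -- w / t → 2/3
  have hwt : Tendsto (fun m : ℕ =>
      ((2/3) * (b m) ^ ((3:ℝ)/2) + (1/2) * Real.log ((b m) ^ ((3:ℝ)/2))) / (b m) ^ ((3:ℝ)/2))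
      atTop (nhds (2/3)) := by
    have h0 : Tendsto (fun m : ℕ =>
        (2/3) + (1/2) * (Real.log ((b m) ^ ((3:ℝ)/2)) / (b m) ^ ((3:ℝ)/2)))
        atTop (nhds ((2/3) + (1/2) * 0)) :=
      tendsto_const_nhds.add (tendsto_const_nhds.mul (hlogdiv.comp httop))
    rw [mul_zero, add_zero] at h0
    refine h0.congr' ?_
    filter_upwards [htpos] with m ht
    field_simp
  -- t / w → 3/2
  have htw : Tendsto (fun m : ℕ =>
      (b m) ^ ((3:ℝ)/2) / ((2/3) * (b m) ^ ((3:ℝ)/2) + (1/2) * Real.log ((b m) ^ ((3:ℝ)/2))))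
      atTop (nhds (3/2)) := by
    have h0 := hwt.inv₀ (by norm_num : (2/3 : ℝ) ≠ 0)
    rw [show ((2:ℝ)/3)⁻¹ = 3/2 by norm_num] at h0
    refine h0.congr fun m => by rw [inv_div]
  -- t / log m → 3/2
  have htL : Tendsto (fun m : ℕ => (b m) ^ ((3:ℝ)/2) / Real.log m) atTop (nhds (3/2)) := by
    have h0 := htw.mul hwL
    rw [show (3/2 : ℝ) * 1 = 3/2 by norm_num] at h0
    refine h0.congr' ?_
    filter_upwards [hwpos] with m hwm
    exact key _ _ _ hwm.ne'
  -- denominator D m = (3/2) log m - (3/4) log (12π) eventually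
  have hDeq : ∀ᶠ m : ℕ in atTop, (3/4) * Real.log ((m:ℝ)^2 / (12 * π))
      = (3/2) * Real.log m - (3/4) * Real.log (12 * π) := by
    filter_upwards [hm2] with m h2
    have hm0 : ((m:ℝ)) ≠ 0 := by positivity
    rw [Real.log_div (pow_ne_zero 2 hm0) (by positivity), Real.log_pow]
    push_cast
    ring
  -- D → atTop
  have hDtop : Tendsto (fun m : ℕ => (3/4) * Real.log ((m:ℝ)^2 / (12 * π))) atTop atTop := by
    refine Tendsto.congr' (hDeq.mono fun m h => h.symm) ?_
    exact tendsto_atTop_add_const_right _ _ (hlogm_top.const_mul_atTop (by norm_num))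
  have hDpos : ∀ᶠ m : ℕ in atTop, 0 < (3/4) * Real.log ((m:ℝ)^2 / (12 * π)) :=
    hDtop.eventually_gt_atTop 0
  -- D / log m → 3/2
  have hDL : Tendsto (fun m : ℕ => (3/4) * Real.log ((m:ℝ)^2 / (12 * π)) / Real.log m)
      atTop (nhds (3/2)) := by
    have h0 : Tendsto (fun m : ℕ => (3/2) - (3/4) * Real.log (12*π) * (Real.log m)⁻¹)
        atTop (nhds ((3/2) - (3/4) * Real.log (12*π) * 0)) :=
      tendsto_const_nhds.sub (tendsto_const_nhds.mul (tendsto_inv_atTop_zero.comp hlogm_top))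
    rw [mul_zero, sub_zero] at h0
    refine h0.congr' ?_
    filter_upwards [hDeq, hlogmpos] with m hD hL
    rw [hD]
    field_simp
  -- log m / D → 2/3
  have hLD : Tendsto (fun m : ℕ => Real.log m / ((3/4) * Real.log ((m:ℝ)^2 / (12 * π))))
      atTop (nhds (2/3)) := by
    have h0 := hDL.inv₀ (by norm_num : (3/2 : ℝ) ≠ 0)
    rw [show ((3:ℝ)/2)⁻¹ = 2/3 by norm_num] at h0
    refine h0.congr fun m => by rw [inv_div]
  -- t / D → 1
  have htD : Tendsto (fun m : ℕ =>
      (b m) ^ ((3:ℝ)/2) / ((3/4) * Real.log ((m:ℝ)^2 / (12 * π)))) atTop (nhds 1) := by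
    have h0 := htL.mul hLD
    rw [show (3/2 : ℝ) * (2/3) = 1 by norm_num] at h0
    refine h0.congr' ?_
    filter_upwards [hlogmpos] with m hL
    exact key _ _ _ hL.ne'
  -- conclude
  have hfin := htD.rpow_const (p := (2:ℝ)/3) (Or.inl one_ne_zero)
  rw [Real.one_rpow] at hfin
  refine hfin.congr' ?_
  filter_upwards [hbpos, hDpos] with m hbm hDm
  rw [Real.div_rpow (Real.rpow_nonneg hbm.le _) hDm.le,
      ← Real.rpow_mul hbm.le, show (3:ℝ)/2*(2/3) = 1 by norm_num, Real.rpow_one]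
end

section
/- The normalizing constants b_m satisfy exp(b_m^{3/2}) / [ (m²/(12π)) / log(m²/(12π)) ]^{3/4} → 1 as m → ∞. -/
open Real Filter

private lemma sq_alg (x m : ℝ) (hx : 0 < x) (hm : 0 < m) :
    (4 * Real.sqrt π * x ^ ((3:ℝ)/4) * Real.exp ((2/3) * x ^ ((3:ℝ)/2)) * (1/m)) *
      (4 * Real.sqrt π * x ^ ((3:ℝ)/4) * Real.exp ((2/3) * x ^ ((3:ℝ)/2)) * (1/m)) =
    ((4/3) * x ^ ((3:ℝ)/2)) * Real.exp ((4/3) * x ^ ((3:ℝ)/2)) / (m ^ 2 / (12 * π)) := by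
  have h1 : x ^ ((3:ℝ)/4) * x ^ ((3:ℝ)/4) = x ^ ((3:ℝ)/2) := by
    rw [← Real.rpow_add hx]; norm_num
  have h2 : Real.exp ((2/3) * x ^ ((3:ℝ)/2)) * Real.exp ((2/3) * x ^ ((3:ℝ)/2))
      = Real.exp ((4/3) * x ^ ((3:ℝ)/2)) := by
    rw [← Real.exp_add]; ring_nf
  have h3 : Real.sqrt π * Real.sqrt π = π := Real.mul_self_sqrt Real.pi_pos.le
  have hπ : (0:ℝ) < π := Real.pi_pos
  calc (4 * Real.sqrt π * x ^ ((3:ℝ)/4) * Real.exp ((2/3) * x ^ ((3:ℝ)/2)) * (1/m)) *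
      (4 * Real.sqrt π * x ^ ((3:ℝ)/4) * Real.exp ((2/3) * x ^ ((3:ℝ)/2)) * (1/m))
      = 16 * (Real.sqrt π * Real.sqrt π) * (x ^ ((3:ℝ)/4) * x ^ ((3:ℝ)/4)) *
        (Real.exp ((2/3) * x ^ ((3:ℝ)/2)) * Real.exp ((2/3) * x ^ ((3:ℝ)/2))) / m ^ 2 := by
        ring
    _ = 16 * π * x ^ ((3:ℝ)/2) * Real.exp ((4/3) * x ^ ((3:ℝ)/2)) / m ^ 2 := by
        rw [h1, h2, h3]
    _ = ((4/3) * x ^ ((3:ℝ)/2)) * Real.exp ((4/3) * x ^ ((3:ℝ)/2)) / (m ^ 2 / (12 * π)) := by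
        rw [div_div_eq_mul_div]
        field_simp
        ring

/-- The Gumbel normalizing constants `b m` for the Tracy–Widom law satisfy
`exp (b m ^ (3/2)) / ((m^2/(12π)) / log (m^2/(12π)))^(3/4) → 1` as `m → ∞`. -/
theorem exp_bm_asymptotic
    (F : ℝ → ℝ) (b : ℕ → ℝ)
    (hFcont : Continuous F)
    (hFmono : StrictMono F)
    (hF0 : Tendsto F atBot (nhds 0))
    (hF1 : Tendsto F atTop (nhds 1))
    (htail : Tendsto (fun x : ℝ =>
        4 * Real.sqrt π * x ^ ((3:ℝ)/4) * Real.exp ((2/3) * x ^ ((3:ℝ)/2)) * (1 - F x))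
      atTop (nhds 1))
    (hb : ∀ m : ℕ, 2 ≤ m → F (b m) = 1 - 1 / m) :
    Tendsto (fun m : ℕ =>
        Real.exp (b m ^ ((3:ℝ)/2)) /
          (((m : ℝ) ^ 2 / (12 * π)) / Real.log ((m : ℝ) ^ 2 / (12 * π))) ^ ((3:ℝ)/4))
      atTop (nhds 1) := by
  have hπ : (0:ℝ) < π := Real.pi_pos
  -- Step 1 : b → ∞
  have hbtop : Tendsto b atTop atTop := by
    rw [tendsto_atTop]
    intro C
    have hFC : F C < 1 := by
      have h1 : F C < F (C + 1) := hFmono (by linarith)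
      have h2 : F (C + 1) ≤ 1 :=
        ge_of_tendsto hF1 ((eventually_ge_atTop (C + 1)).mono fun x hx => hFmono.monotone hx)
      linarith
    have hone : Tendsto (fun m : ℕ => 1 - 1 / (m : ℝ)) atTop (nhds 1) := by
      have : Tendsto (fun n : ℕ => 1 / (n : ℝ)) atTop (nhds 0) := tendsto_one_div_atTop_nhds_zero_nat
      simpa using tendsto_const_nhds.sub this
    have hev : ∀ᶠ m : ℕ in atTop, F C < 1 - 1 / (m : ℝ) := hone.eventually (lt_mem_nhds hFC)
    filter_upwards [hev, eventually_ge_atTop 2] with m h1 h2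
    have : F C < F (b m) := by rw [hb m h2]; exact h1
    exact (hFmono.lt_iff_lt.mp this).le
  have hbpos : ∀ᶠ m : ℕ in atTop, 0 < b m := hbtop.eventually (eventually_gt_atTop 0)
  have hstop : Tendsto (fun m : ℕ => (4/3 : ℝ) * b m ^ ((3:ℝ)/2)) atTop atTop := by
    apply Tendsto.const_mul_atTop (by norm_num : (0:ℝ) < 4/3)
    exact (tendsto_rpow_atTop (by norm_num : (0:ℝ) < 3/2)).comp hbtop
  have hAtop : Tendsto (fun m : ℕ => (m : ℝ) ^ 2 / (12 * π)) atTop atTop := by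
    apply Tendsto.atTop_div_const (by positivity)
    exact (tendsto_pow_atTop two_ne_zero).comp tendsto_natCast_atTop_atTop
  -- Step 2 : s·eˢ/A → 1
  have htb := htail.comp hbtop
  have hsq : Tendsto (fun m : ℕ =>
      ((4/3 : ℝ) * b m ^ ((3:ℝ)/2)) * Real.exp ((4/3) * b m ^ ((3:ℝ)/2)) /
        ((m : ℝ) ^ 2 / (12 * π))) atTop (nhds 1) := by
    have h2 := htb.mul htb
    rw [mul_one] at h2
    apply h2.congr'
    filter_upwards [hbpos, eventually_ge_atTop 2] with m hbm hm2
    have hm0 : (0:ℝ) < (m:ℝ) := by exact_mod_cast Nat.lt_of_lt_of_le Nat.zero_lt_two hm2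
    have h1F : 1 - F (b m) = 1 / (m : ℝ) := by rw [hb m hm2]; ring
    simp only [Function.comp]
    rw [h1F]
    exact sq_alg (b m) m hbm hm0
  -- Step 3 : log s + s - log A → 0
  have hlog : Tendsto (fun m : ℕ =>
      Real.log ((4/3 : ℝ) * b m ^ ((3:ℝ)/2)) + (4/3) * b m ^ ((3:ℝ)/2) -
        Real.log ((m : ℝ) ^ 2 / (12 * π))) atTop (nhds 0) := by
    have hc : Tendsto (fun m : ℕ => Real.log (((4/3 : ℝ) * b m ^ ((3:ℝ)/2)) *
        Real.exp ((4/3) * b m ^ ((3:ℝ)/2)) / ((m : ℝ) ^ 2 / (12 * π)))) atTop (nhds 0) := by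
      have := (Real.continuousAt_log one_ne_zero).tendsto.comp hsq
      simpa [Function.comp_def] using this
    apply hc.congr'
    filter_upwards [hstop.eventually (eventually_gt_atTop 0),
      hAtop.eventually (eventually_gt_atTop 0)] with m hs hA
    rw [Real.log_div (by positivity) (ne_of_gt hA),
      Real.log_mul (ne_of_gt hs) (Real.exp_ne_zero _), Real.log_exp]
  -- Step 4 : log A / s → 1
  have hL3 : Tendsto (fun m : ℕ =>
      Real.log ((m : ℝ) ^ 2 / (12 * π)) / ((4/3 : ℝ) * b m ^ ((3:ℝ)/2))) atTop (nhds 1) := by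
    have hlogs : Tendsto (fun m : ℕ =>
        Real.log ((4/3 : ℝ) * b m ^ ((3:ℝ)/2)) / ((4/3 : ℝ) * b m ^ ((3:ℝ)/2)))
        atTop (nhds 0) :=
      (Real.isLittleO_log_id_atTop.tendsto_div_nhds_zero).comp hstop
    have hinv : Tendsto (fun m : ℕ => ((4/3 : ℝ) * b m ^ ((3:ℝ)/2))⁻¹) atTop (nhds 0) :=
      hstop.inv_tendsto_atTop
    have hcomb : Tendsto (fun m : ℕ =>
        1 + Real.log ((4/3 : ℝ) * b m ^ ((3:ℝ)/2)) / ((4/3 : ℝ) * b m ^ ((3:ℝ)/2)) -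
          (Real.log ((4/3 : ℝ) * b m ^ ((3:ℝ)/2)) + (4/3) * b m ^ ((3:ℝ)/2) -
            Real.log ((m : ℝ) ^ 2 / (12 * π))) * ((4/3 : ℝ) * b m ^ ((3:ℝ)/2))⁻¹)
        atTop (nhds 1) := by
      have := ((tendsto_const_nhds (x := (1:ℝ))).add hlogs).sub (hlog.mul hinv)
      simpa using this
    apply hcomb.congr'
    filter_upwards [hstop.eventually (eventually_gt_atTop 0)] with m hs
    have ht : b m ^ ((3:ℝ)/2) ≠ 0 := ne_of_gt (by linarith)
    field_simp [ht]
    ring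
  -- Step 5 : combine
  have hmul := hsq.mul hL3
  rw [mul_one] at hmul
  have hcont : ContinuousAt (fun x : ℝ => x ^ ((3:ℝ)/4)) 1 :=
    Real.continuousAt_rpow_const 1 _ (Or.inl one_ne_zero)
  have hfin := hcont.tendsto.comp hmul
  rw [Real.one_rpow] at hfin
  apply hfin.congr'
  filter_upwards [hstop.eventually (eventually_gt_atTop 0),
    hAtop.eventually (eventually_gt_atTop 1)] with m hs hA1
  have hA0 : (0:ℝ) < (m : ℝ) ^ 2 / (12 * π) := lt_trans one_pos hA1
  have hL0 : (0:ℝ) < Real.log ((m : ℝ) ^ 2 / (12 * π)) := Real.log_pos hA1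
  simp only [Function.comp]
  have hEq : ((4/3 : ℝ) * b m ^ ((3:ℝ)/2)) * Real.exp ((4/3) * b m ^ ((3:ℝ)/2)) /
        ((m : ℝ) ^ 2 / (12 * π)) *
      (Real.log ((m : ℝ) ^ 2 / (12 * π)) / ((4/3 : ℝ) * b m ^ ((3:ℝ)/2))) =
      Real.exp ((4/3) * b m ^ ((3:ℝ)/2)) * Real.log ((m : ℝ) ^ 2 / (12 * π)) /
        ((m : ℝ) ^ 2 / (12 * π)) := by
    have hs' : ((4/3:ℝ) * b m ^ ((3:ℝ)/2)) ≠ 0 := ne_of_gt hs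
    calc ((4/3 : ℝ) * b m ^ ((3:ℝ)/2)) * Real.exp ((4/3) * b m ^ ((3:ℝ)/2)) /
          ((m : ℝ) ^ 2 / (12 * π)) *
        (Real.log ((m : ℝ) ^ 2 / (12 * π)) / ((4/3 : ℝ) * b m ^ ((3:ℝ)/2)))
        = (((4/3 : ℝ) * b m ^ ((3:ℝ)/2)) / ((4/3 : ℝ) * b m ^ ((3:ℝ)/2))) *
          (Real.exp ((4/3) * b m ^ ((3:ℝ)/2)) * Real.log ((m : ℝ) ^ 2 / (12 * π)) /
            ((m : ℝ) ^ 2 / (12 * π))) := by ring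
      _ = Real.exp ((4/3) * b m ^ ((3:ℝ)/2)) * Real.log ((m : ℝ) ^ 2 / (12 * π)) /
            ((m : ℝ) ^ 2 / (12 * π)) := by rw [div_self hs', one_mul]
  rw [hEq]
  rw [Real.div_rpow (by positivity) hA0.le, Real.mul_rpow (Real.exp_pos _).le hL0.le]
  rw [Real.div_rpow hA0.le hL0.le]
  have hE : Real.exp ((4/3) * b m ^ ((3:ℝ)/2)) ^ ((3:ℝ)/4) = Real.exp (b m ^ ((3:ℝ)/2)) := by
    rw [← Real.exp_mul]; congr 1; ring
  rw [hE]
  rw [div_div_eq_mul_div]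
end

section
/- The normalizing constants a_m satisfy a_m · [log(m²/(12π))]^{1/3} → (4/3)^{1/2} · (3/4)^{1/6} as m → ∞; that is, a_m ~ (4/3)^{1/2}(3/4)^{1/6} · log^{−1/3}(m²/(12π)). -/
open Real Filter

set_option maxHeartbeats 1000000 in
/-- The Gumbel normalizing constants `a m` for the Tracy–Widom law satisfy
`a m * (log (m^2/(12π)))^(1/3) → (4/3)^(1/2) * (3/4)^(1/6)` as `m → ∞`. -/
theorem am_asymptotic
    (F R : ℝ → ℝ) (a b : ℕ → ℝ)
    (hFdiff : Differentiable ℝ F)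
    (hF'diff : Differentiable ℝ (deriv F))
    (hFmono : StrictMono F)
    (hF0 : Tendsto F atBot (nhds 0))
    (hF1 : Tendsto F atTop (nhds 1))
    (hRdiff : Differentiable ℝ R)
    (hfactor : ∀ x, deriv F x = F x * R x)
    (htail : Tendsto (fun x : ℝ =>
        4 * Real.sqrt π * x ^ ((3:ℝ)/4) * Real.exp ((2/3) * x ^ ((3:ℝ)/2)) * (1 - F x))
      atTop (nhds 1))
    (hRtail : Tendsto (fun x : ℝ =>
        4 * Real.sqrt π * x ^ ((1:ℝ)/4) * Real.exp ((2/3) * x ^ ((3:ℝ)/2)) * R x)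
      atTop (nhds 1))
    (hb : ∀ m : ℕ, 2 ≤ m → F (b m) = 1 - 1 / m)
    (ha : ∀ m : ℕ, 2 ≤ m → a m = 1 / (m * deriv F (b m))) :
    Tendsto (fun m : ℕ =>
        a m * (Real.log ((m : ℝ) ^ 2 / (12 * π))) ^ ((1:ℝ)/3))
      atTop (nhds (((4:ℝ)/3) ^ ((1:ℝ)/2) * ((3:ℝ)/4) ^ ((1:ℝ)/6))) := by
  have hπ : (0:ℝ) < π := Real.pi_pos
  have hsπ : (0:ℝ) < Real.sqrt π := Real.sqrt_pos.mpr hπ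
  -- F ≤ 1 everywhere, in fact < 1
  have hFle : ∀ x, F x ≤ 1 := by
    intro x
    refine ge_of_tendsto hF1 ?_
    filter_upwards [eventually_ge_atTop x] with y hy
    exact hFmono.monotone hy
  have hFlt : ∀ x, F x < 1 := fun x =>
    lt_of_lt_of_le (hFmono (lt_add_one x)) (hFle (x + 1))
  -- 1 - 1/m → 1
  have hone : Tendsto (fun m : ℕ => 1 - 1/(m:ℝ)) atTop (nhds 1) := by
    simpa using tendsto_const_nhds.sub (tendsto_one_div_atTop_nhds_zero_nat : Tendsto (fun n : ℕ => 1/(n:ℝ)) atTop (nhds 0))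
  -- F (b m) → 1
  have hFb : Tendsto (fun m : ℕ => F (b m)) atTop (nhds 1) := by
    refine Tendsto.congr' ?_ hone
    filter_upwards [eventually_ge_atTop 2] with m hm
    exact (hb m hm).symm
  -- b m → ∞
  have hbtop : Tendsto b atTop atTop := by
    rw [tendsto_atTop]
    intro M
    filter_upwards [hFb.eventually (eventually_gt_nhds (hFlt M))] with m hm
    exact (hFmono.lt_iff_lt.mp hm).le
  have hbpos : ∀ᶠ m : ℕ in atTop, 0 < b m := hbtop.eventually_gt_atTop 0
  set L : ℕ → ℝ := fun m => Real.log ((m : ℝ) ^ 2 / (12 * π)) with hL_def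
  set t : ℕ → ℝ := fun m => (b m) ^ ((3:ℝ)/2) with ht_def
  have httop : Tendsto t atTop atTop :=
    (tendsto_rpow_atTop (by norm_num : (0:ℝ) < 3/2)).comp hbtop
  -- composed tail limits
  have hT1 : Tendsto (fun m : ℕ => 4 * Real.sqrt π * (b m) ^ ((3:ℝ)/4) *
      Real.exp ((2/3) * (b m) ^ ((3:ℝ)/2)) * (1 - F (b m))) atTop (nhds 1) := htail.comp hbtop
  have hT2 : Tendsto (fun m : ℕ => 4 * Real.sqrt π * (b m) ^ ((1:ℝ)/4) *
      Real.exp ((2/3) * (b m) ^ ((3:ℝ)/2)) * R (b m)) atTop (nhds 1) := hRtail.comp hbtop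
  -- R (b m) > 0 eventually
  have hRpos : ∀ᶠ m : ℕ in atTop, 0 < R (b m) := by
    filter_upwards [hT2.eventually (eventually_gt_nhds (by norm_num : (1:ℝ)/2 < 1)),
      hbpos] with m hm hx
    by_contra h
    push_neg at h
    have hpos : 0 < 4 * Real.sqrt π * (b m) ^ ((1:ℝ)/4) *
        Real.exp ((2/3) * (b m) ^ ((3:ℝ)/2)) := by positivity
    nlinarith [mul_nonpos_of_nonneg_of_nonpos hpos.le h]
  -- T1 with 1 - F(b m) = 1/m
  have hT1' : Tendsto (fun m : ℕ => 4 * Real.sqrt π * (b m) ^ ((3:ℝ)/4) *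
      Real.exp ((2/3) * t m) * (1/(m:ℝ))) atTop (nhds 1) := by
    refine Tendsto.congr' ?_ hT1
    filter_upwards [eventually_ge_atTop 2] with m hm
    have h1 : 1 - F (b m) = 1/(m:ℝ) := by rw [hb m hm]; ring
    simp only [ht_def, h1]
  -- ratio: b m ^ (1/2) * (1/m) / R (b m) → 1
  have hr : Tendsto (fun m : ℕ => (b m) ^ ((1:ℝ)/2) * (1/(m:ℝ)) / R (b m))
      atTop (nhds 1) := by
    have hdiv := hT1'.div hT2 one_ne_zero
    rw [show (1:ℝ)/1 = 1 by norm_num] at hdiv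
    refine Tendsto.congr' ?_ hdiv
    filter_upwards [hbpos, hRpos] with m hx hR
    have hsplit : (b m) ^ ((3:ℝ)/4) = (b m) ^ ((1:ℝ)/2) * (b m) ^ ((1:ℝ)/4) := by
      rw [← Real.rpow_add hx]; norm_num
    have h1 : (b m) ^ ((1:ℝ)/4) ≠ 0 := (Real.rpow_pos_of_pos hx _).ne'
    have h2 : Real.exp ((2/3) * (b m) ^ ((3:ℝ)/2)) ≠ 0 := Real.exp_ne_zero _
    have hC : (4 * Real.sqrt π * (b m) ^ ((1:ℝ)/4) *
        Real.exp ((2/3) * (b m) ^ ((3:ℝ)/2)) : ℝ) ≠ 0 := by positivity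
    simp only [ht_def, Pi.div_apply]
    rw [show 4 * Real.sqrt π * (b m) ^ ((3:ℝ)/4) * Real.exp ((2/3) * (b m) ^ ((3:ℝ)/2)) * (1/(m:ℝ))
        = (4 * Real.sqrt π * (b m) ^ ((1:ℝ)/4) * Real.exp ((2/3) * (b m) ^ ((3:ℝ)/2)))
          * ((b m) ^ ((1:ℝ)/2) * (1/(m:ℝ))) by rw [hsplit]; ring,
      mul_div_mul_left _ _ hC]
  -- log of T1' tends to 0
  have hlog : Tendsto (fun m : ℕ => Real.log (4 * Real.sqrt π * (b m) ^ ((3:ℝ)/4) *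
      Real.exp ((2/3) * t m) * (1/(m:ℝ)))) atTop (nhds 0) := by
    have := (Real.continuousAt_log one_ne_zero).tendsto.comp hT1'
    rwa [Real.log_one] at this
  -- D m → 0
  have hD : Tendsto (fun m : ℕ => (2/3) * t m + (1/2) * Real.log (t m) +
      Real.log (4 * Real.sqrt π) - Real.log m) atTop (nhds 0) := by
    refine Tendsto.congr' ?_ hlog
    filter_upwards [hbpos, eventually_ge_atTop 2] with m hx hm
    have hm0 : (0:ℝ) < (m:ℝ) := by
      have : (0:ℕ) < m := by omega
      exact_mod_cast this
    have h1 : (4 * Real.sqrt π : ℝ) ≠ 0 := by positivity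
    have h2 : (b m) ^ ((3:ℝ)/4) ≠ 0 := (Real.rpow_pos_of_pos hx _).ne'
    have h3 : Real.exp ((2/3) * t m) ≠ 0 := Real.exp_ne_zero _
    have hlt : Real.log (t m) = (3/2) * Real.log (b m) := by
      simp only [ht_def]; exact Real.log_rpow hx _
    rw [Real.log_mul (mul_ne_zero (mul_ne_zero h1 h2) h3) (by positivity),
      Real.log_mul (mul_ne_zero h1 h2) h3,
      Real.log_mul h1 h2, Real.log_rpow hx, Real.log_exp, one_div, Real.log_inv, hlt]
    ring
  have hinv : Tendsto (fun m : ℕ => (Real.log m)⁻¹) atTop (nhds 0) :=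
    (Real.tendsto_log_atTop.comp tendsto_natCast_atTop_atTop).inv_tendsto_atTop
  -- h(t m) - log m → -log(4√π)
  have hE : Tendsto (fun m : ℕ => ((2/3) * t m + (1/2) * Real.log (t m)) - Real.log m)
      atTop (nhds (0 - Real.log (4 * Real.sqrt π))) := by
    have := hD.sub_const (Real.log (4 * Real.sqrt π))
    exact Tendsto.congr (fun m => by ring) this
  -- B: h(t m) / log m → 1
  have hB : Tendsto (fun m : ℕ => ((2/3) * t m + (1/2) * Real.log (t m)) / Real.log m)
      atTop (nhds 1) := by
    have h0 := hE.mul hinv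
    rw [show (0 - Real.log (4 * Real.sqrt π)) * 0 = 0 by ring] at h0
    have h1 := (tendsto_const_nhds : Tendsto (fun _ : ℕ => (1:ℝ)) atTop (nhds 1)).add h0
    rw [add_zero] at h1
    refine Tendsto.congr' ?_ h1
    filter_upwards [eventually_ge_atTop 2] with m hm
    have hml : (0:ℝ) < Real.log m := Real.log_pos (by exact_mod_cast hm)
    field_simp
    ring
  -- A: t m / h(t m) → 3/2
  have hφ : Tendsto (fun s : ℝ => ((2:ℝ)/3 + (1/2) * (Real.log s / s))⁻¹)
      atTop (nhds (3/2)) := by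
    have hls : Tendsto (fun s : ℝ => Real.log s / s) atTop (nhds 0) :=
      Real.isLittleO_log_id_atTop.tendsto_div_nhds_zero
    have h0 : Tendsto (fun s : ℝ => (2:ℝ)/3 + (1/2) * (Real.log s / s))
        atTop (nhds ((2:ℝ)/3 + (1/2) * 0)) := tendsto_const_nhds.add (hls.const_mul _)
    rw [show (2:ℝ)/3 + (1/2) * 0 = 2/3 by norm_num] at h0
    have := h0.inv₀ (by norm_num)
    rwa [show ((2:ℝ)/3)⁻¹ = 3/2 by norm_num] at this
  have hA : Tendsto (fun m : ℕ => t m / ((2/3) * t m + (1/2) * Real.log (t m)))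
      atTop (nhds (3/2)) := by
    refine Tendsto.congr' ?_ (hφ.comp httop)
    filter_upwards [httop.eventually_ge_atTop 1] with m hs
    have hs0 : (0:ℝ) < t m := lt_of_lt_of_le one_pos hs
    have hhd : ((2:ℝ)/3 + (1/2) * (Real.log (t m) / t m))
        = ((2/3) * t m + (1/2) * Real.log (t m)) / t m := by
      field_simp
    simp only [Function.comp]
    rw [hhd, inv_div]
  -- t m / log m → 3/2
  have ht32 : Tendsto (fun m : ℕ => t m / Real.log m) atTop (nhds (3/2)) := by
    have h0 := hA.mul hB
    rw [show (3/2:ℝ) * 1 = 3/2 by norm_num] at h0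
    refine Tendsto.congr' ?_ h0
    filter_upwards [httop.eventually_ge_atTop 1, eventually_ge_atTop 2] with m hs hm
    have hs0 : (0:ℝ) < t m := lt_of_lt_of_le one_pos hs
    have hlogt : (0:ℝ) ≤ Real.log (t m) := Real.log_nonneg hs
    have hh : ((2:ℝ)/3) * t m + (1/2) * Real.log (t m) ≠ 0 := by positivity
    rw [div_mul_div_comm, mul_comm (t m) _, mul_div_mul_left _ _ hh]
  -- log m / t m → 2/3
  have hlt23 : Tendsto (fun m : ℕ => Real.log m / t m) atTop (nhds (2/3)) := by
    have := ht32.inv₀ (by norm_num)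
    rw [show ((3:ℝ)/2)⁻¹ = 2/3 by norm_num] at this
    exact Tendsto.congr (fun m => by rw [inv_div]) this
  -- L m / log m → 2
  have hLlog : Tendsto (fun m : ℕ => L m / Real.log m) atTop (nhds 2) := by
    have h0 : Tendsto (fun m : ℕ => 2 - Real.log (12 * π) * (Real.log m)⁻¹)
        atTop (nhds (2 - Real.log (12 * π) * 0)) :=
      (tendsto_const_nhds : Tendsto (fun _ : ℕ => (2:ℝ)) atTop (nhds 2)).sub
        (hinv.const_mul _)
    rw [show (2:ℝ) - Real.log (12 * π) * 0 = 2 by ring] at h0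
    refine Tendsto.congr' ?_ h0
    filter_upwards [eventually_ge_atTop 2] with m hm
    have hml : (0:ℝ) < Real.log m := Real.log_pos (by exact_mod_cast hm)
    have hm0 : ((m:ℝ)) ≠ 0 := by
      have : (0:ℕ) < m := by omega
      positivity
    have hLm : L m = 2 * Real.log m - Real.log (12 * π) := by
      simp only [hL_def]
      rw [Real.log_div (pow_ne_zero _ hm0) (by positivity), Real.log_pow]
      push_cast; ring
    rw [hLm]
    field_simp
  -- L m / t m → 4/3
  have hLt : Tendsto (fun m : ℕ => L m / t m) atTop (nhds (4/3)) := by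
    have h0 := hLlog.mul hlt23
    rw [show (2:ℝ) * (2/3) = 4/3 by norm_num] at h0
    refine Tendsto.congr' ?_ h0
    filter_upwards [eventually_ge_atTop 2] with m hm
    have hml : Real.log m ≠ 0 := (Real.log_pos (by exact_mod_cast hm)).ne'
    rw [div_mul_div_comm, mul_comm (L m) _, mul_div_mul_left _ _ hml]
  -- (L m / t m)^(1/3) → (4/3)^(1/3)
  have hpow : Tendsto (fun m : ℕ => (L m / t m) ^ ((1:ℝ)/3))
      atTop (nhds (((4:ℝ)/3) ^ ((1:ℝ)/3))) :=
    ((Real.continuousAt_rpow_const _ _ (Or.inl (by norm_num))).tendsto).comp hLt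
  -- m/(m-1) → 1
  have hmm1 : Tendsto (fun m : ℕ => (m:ℝ)/((m:ℝ) - 1)) atTop (nhds 1) := by
    have h0 := hone.inv₀ one_ne_zero
    rw [inv_one] at h0
    refine Tendsto.congr' ?_ h0
    filter_upwards [eventually_ge_atTop 2] with m hm
    have hm0 : ((m:ℝ)) ≠ 0 := by
      have : (0:ℕ) < m := by omega
      positivity
    have : (1:ℝ) - 1/(m:ℝ) = ((m:ℝ) - 1)/(m:ℝ) := by field_simp
    rw [this, inv_div]
  -- L m → ∞ so L m > 0 eventually
  have hLtop : Tendsto L atTop atTop := by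
    apply Real.tendsto_log_atTop.comp
    apply Tendsto.atTop_div_const (by positivity : (0:ℝ) < 12 * π)
    apply tendsto_atTop_mono (fun m : ℕ => ?_) tendsto_natCast_atTop_atTop
    have : m ≤ m ^ 2 := Nat.le_self_pow two_ne_zero m
    exact_mod_cast this
  have hLpos : ∀ᶠ m : ℕ in atTop, 0 < L m := hLtop.eventually_gt_atTop 0
  -- combine
  have hfin := (hr.mul hmm1).mul hpow
  rw [show (1:ℝ) * 1 = 1 by norm_num, one_mul] at hfin
  have hconst : ((4:ℝ)/3) ^ ((1:ℝ)/3) = ((4:ℝ)/3) ^ ((1:ℝ)/2) * ((3:ℝ)/4) ^ ((1:ℝ)/6) := by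
    rw [show ((3:ℝ)/4) = ((4:ℝ)/3)⁻¹ by norm_num,
      Real.inv_rpow (by norm_num : (0:ℝ) ≤ 4/3), ← Real.rpow_neg (by norm_num : (0:ℝ) ≤ 4/3),
      ← Real.rpow_add (by norm_num : (0:ℝ) < 4/3)]
    norm_num
  rw [hconst] at hfin
  refine Tendsto.congr' ?_ hfin
  filter_upwards [hbpos, hRpos, hLpos, eventually_ge_atTop 2] with m hx hR hL hm
  have hm0 : ((m:ℝ)) ≠ 0 := by
    have : (0:ℕ) < m := by omega
    positivity
  have hm1 : ((m:ℝ)) - 1 ≠ 0 := by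
    have : (2:ℝ) ≤ (m:ℝ) := by exact_mod_cast hm
    nlinarith
  have ht0 : (0:ℝ) < t m := Real.rpow_pos_of_pos hx _
  have hX : (0:ℝ) < (b m) ^ ((1:ℝ)/2) := Real.rpow_pos_of_pos hx _
  have htpow : t m ^ ((1:ℝ)/3) = (b m) ^ ((1:ℝ)/2) := by
    simp only [ht_def]
    rw [← Real.rpow_mul hx.le]
    norm_num
  have hdivpow : (L m / t m) ^ ((1:ℝ)/3) = L m ^ ((1:ℝ)/3) / (b m) ^ ((1:ℝ)/2) := by
    rw [Real.div_rpow hL.le ht0.le, htpow]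
  have haa : a m = 1 / (((m:ℝ) - 1) * R (b m)) := by
    rw [ha m hm, hfactor, hb m hm]
    congr 1
    field_simp
  rw [hdivpow, haa]
  field_simp
  ring
end

section
/- Suppose there is a constant C > 0 such that |G_p(x) − F(x)| ≤ C·p^{−2/3}·e^{−x/2} for all x ≥ 0 and all p; suppose m_p → ∞ with limsup_{p→∞} m_p / p^{2/3} < ∞; suppose a_m > 0 for all m and for each fixed y ∈ ℝ one has a_{m_p}·y + b_{m_p} → ∞ as p → ∞; and suppose for each y ∈ ℝ that (F(a_{m_p}·y + b_{m_p}))^{m_p} → exp(−e^{−y}) as p → ∞. Then for each y ∈ ℝ, (G_p(a_{m_p}·y + b_{m_p}))^{m_p} → exp(−e^{−y}) as p → ∞. -/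
open Real Filter

lemma abs_pow_sub_pow_le_aux (u v : ℝ) (hu : u ∈ Set.Icc (0:ℝ) 1)
    (hv : v ∈ Set.Icc (0:ℝ) 1) (n : ℕ) : |u ^ n - v ^ n| ≤ n * |u - v| := by
  induction n with
  | zero => simp
  | succ n ih =>
    have h1 : u ^ (n + 1) - v ^ (n + 1) = u * (u ^ n - v ^ n) + (u - v) * v ^ n := by
      ring
    have hun : |u| ≤ 1 := abs_le.2 ⟨by linarith [hu.1], hu.2⟩
    have hvn : |v ^ n| ≤ 1 := by
      rw [abs_pow]
      exact pow_le_one₀ (abs_nonneg v) (abs_le.2 ⟨by linarith [hv.1], hv.2⟩)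
    calc |u ^ (n + 1) - v ^ (n + 1)|
        ≤ |u * (u ^ n - v ^ n)| + |(u - v) * v ^ n| := by
          rw [h1]; exact abs_add_le _ _
      _ = |u| * |u ^ n - v ^ n| + |u - v| * |v ^ n| := by rw [abs_mul, abs_mul]
      _ ≤ 1 * (n * |u - v|) + |u - v| * 1 := by
          gcongr
      _ = (↑(n + 1) : ℝ) * |u - v| := by push_cast; ring

/-- Transfer of the Gumbel limit from the Tracy–Widom law `F` to the finite-`p`
distributions `G p` under Johnstone's rate bound: if
`|G p x - F x| ≤ C p^{-2/3} e^{-x/2}` for `x ≥ 0`, `m p → ∞` with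
`limsup m p / p^{2/3} < ∞`, `a m > 0`, `a (m p) y + b (m p) → ∞` and
`(F (a (m p) y + b (m p)))^(m p) → exp (-e^{-y})`, then also
`(G p (a (m p) y + b (m p)))^(m p) → exp (-e^{-y})`. -/
theorem gumbel_transfer_johnstone_rate
    (G : ℕ → ℝ → ℝ) (F : ℝ → ℝ) (m : ℕ → ℕ) (a b : ℕ → ℝ) (C : ℝ)
    (hC : 0 < C)
    (hG01 : ∀ p x, G p x ∈ Set.Icc (0:ℝ) 1)
    (hF01 : ∀ x, F x ∈ Set.Icc (0:ℝ) 1)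
    (hrate : ∀ p : ℕ, 1 ≤ p → ∀ x : ℝ, 0 ≤ x →
      |G p x - F x| ≤ C * (p : ℝ) ^ (-(2:ℝ)/3) * Real.exp (-x/2))
    (hm : Tendsto m atTop atTop)
    (hlimsup : IsBoundedUnder (· ≤ ·) atTop
      (fun p : ℕ => (m p : ℝ) / (p : ℝ) ^ ((2:ℝ)/3)))
    (ha : ∀ k : ℕ, 0 < a k)
    (hab : ∀ y : ℝ, Tendsto (fun p : ℕ => a (m p) * y + b (m p)) atTop atTop)
    (hF : ∀ y : ℝ, Tendsto (fun p : ℕ => (F (a (m p) * y + b (m p))) ^ (m p))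
      atTop (nhds (Real.exp (-Real.exp (-y))))) :
    ∀ y : ℝ, Tendsto (fun p : ℕ => (G p (a (m p) * y + b (m p))) ^ (m p))
      atTop (nhds (Real.exp (-Real.exp (-y)))) := by
  intro y
  set x : ℕ → ℝ := fun p => a (m p) * y + b (m p) with hx
  obtain ⟨M, hM⟩ := hlimsup
  rw [eventually_map] at hM
  -- The bound sequence tends to 0
  have hexp : Tendsto (fun p : ℕ => C * M * Real.exp (-(x p) / 2)) atTop (nhds 0) := by
    have h1 : Tendsto (fun p : ℕ => -(x p) / 2) atTop atBot := by
      exact Tendsto.atBot_div_const (by norm_num) (tendsto_neg_atTop_atBot.comp (hab y))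
    have := Real.tendsto_exp_atBot.comp h1
    simpa using this.const_mul (C * M)
  have key : Tendsto (fun p : ℕ => (G p (x p)) ^ (m p) - (F (x p)) ^ (m p)) atTop (nhds 0) := by
    apply squeeze_zero_norm' _ hexp
    have hx0 : ∀ᶠ p : ℕ in atTop, 0 ≤ x p := (hab y).eventually_ge_atTop 0
    have hp1 : ∀ᶠ p : ℕ in atTop, 1 ≤ p := eventually_ge_atTop 1
    filter_upwards [hx0, hp1, hM] with p hxp hp1 hMp
    have hrp : (0:ℝ) < (p : ℝ) ^ ((2:ℝ)/3) :=
      Real.rpow_pos_of_pos (by exact_mod_cast hp1) _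
    have h1 : |G p (x p) - F (x p)| ≤ C * (p : ℝ) ^ (-(2:ℝ)/3) * Real.exp (-(x p)/2) :=
      hrate p hp1 (x p) hxp
    have h2 : ((p:ℝ)) ^ (-(2:ℝ)/3) = 1 / (p : ℝ) ^ ((2:ℝ)/3) := by
      rw [show (-(2:ℝ)/3) = -((2:ℝ)/3) by ring, Real.rpow_neg (Nat.cast_nonneg p), one_div]
    have h3 : ‖(G p (x p)) ^ (m p) - (F (x p)) ^ (m p)‖ ≤ (m p : ℝ) * |G p (x p) - F (x p)| :=
      abs_pow_sub_pow_le_aux _ _ (hG01 p (x p)) (hF01 (x p)) (m p)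
    have hm2 : (m p : ℝ) / (p : ℝ) ^ ((2:ℝ)/3) ≤ M := hMp
    calc ‖(G p (x p)) ^ (m p) - (F (x p)) ^ (m p)‖
        ≤ (m p : ℝ) * (C * (p : ℝ) ^ (-(2:ℝ)/3) * Real.exp (-(x p)/2)) := by
          refine h3.trans ?_
          exact mul_le_mul_of_nonneg_left h1 (Nat.cast_nonneg _)
      _ = C * ((m p : ℝ) / (p : ℝ) ^ ((2:ℝ)/3)) * Real.exp (-(x p)/2) := by
          rw [h2]; ring
      _ ≤ C * M * Real.exp (-(x p)/2) := by
          exact mul_le_mul_of_nonneg_right (mul_le_mul_of_nonneg_left hm2 hC.le)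
            (Real.exp_nonneg _)
  have := (hF y).add key
  simpa [hx] using this
end

section
/- For each positive integer p, let X^p_1, …, X^p_{m_p} be independent identically distributed real random variables with common cumulative distribution function G_p. Under the hypotheses that |G_p(x) − F(x)| ≤ C·p^{−2/3}·e^{−x/2} for all x ≥ 0 and all p (for some constant C > 0 and a cumulative distribution function F), that m_p → ∞ with limsup_{p→∞} m_p/p^{2/3} < ∞, that a_m > 0, a_{m_p}·y + b_{m_p} → ∞ for each fixed y, and that (F(a_{m_p}·y + b_{m_p}))^{m_p} → exp(−e^{−y}) for each y, the normalized maximum Y^p = (max_{1≤k≤m_p} X^p_k − b_{m_p})/a_{m_p} satisfies P(Y^p ≤ y) → exp(−e^{−y}) for every y ∈ ℝ; i.e., Y^p converges in distribution to the standard Gumbel distribution. -/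
open Real Filter MeasureTheory

lemma pow_abs_sub_le (A B : ℝ) (hA : A ∈ Set.Icc (0:ℝ) 1) (hB : B ∈ Set.Icc (0:ℝ) 1)
    (n : ℕ) : |A ^ n - B ^ n| ≤ n * |A - B| := by
  induction n with
  | zero => simp
  | succ n ih =>
    have h1 : A ^ (n+1) - B ^ (n+1) = A * (A ^ n - B ^ n) + B ^ n * (A - B) := by ring
    have hBn : |B ^ n| ≤ 1 := by
      rw [abs_of_nonneg (pow_nonneg hB.1 n)]
      exact pow_le_one₀ hB.1 hB.2
    have hAabs : |A| ≤ 1 := by rw [abs_of_nonneg hA.1]; exact hA.2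
    calc |A ^ (n+1) - B ^ (n+1)| ≤ |A * (A ^ n - B ^ n)| + |B ^ n * (A - B)| := by
          rw [h1]; exact abs_add_le _ _
      _ ≤ |A ^ n - B ^ n| + |A - B| := by
          rw [abs_mul, abs_mul]
          exact add_le_add (mul_le_of_le_one_left (abs_nonneg _) hAabs) (mul_le_of_le_one_left (abs_nonneg _) hBn)
      _ ≤ n * |A - B| + |A - B| := by gcongr
      _ = (n + 1 : ℕ) * |A - B| := by push_cast; ring

/-- Main theorem: for each `p` let `X p 0, …, X p (m p - 1)` be i.i.d. random
variables with common cdf `G p`. Under Johnstone's rate bound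
`|G p x - F x| ≤ C p^{-2/3} e^{-x/2}` for `x ≥ 0`, `m p → ∞` with
`limsup m p / p^{2/3} < ∞`, `a > 0`, `a (m p) y + b (m p) → ∞` and
`(F (a (m p) y + b (m p)))^(m p) → exp(-e^{-y})`, the normalized maximum
`Y^p = (max_k X p k - b (m p)) / a (m p)` converges in distribution to the
standard Gumbel law: `P(Y^p ≤ y) → exp (-e^{-y})` for every `y`. -/
theorem normalized_max_greatest_root_gumbel
    (G : ℕ → ℝ → ℝ) (F : ℝ → ℝ) (m : ℕ → ℕ) (a b : ℕ → ℝ) (C : ℝ)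
    (Ω : ℕ → Type) [∀ p, MeasurableSpace (Ω p)]
    (μ : ∀ p, Measure (Ω p)) [∀ p, IsProbabilityMeasure (μ p)]
    (X : ∀ p : ℕ, Fin (m p) → Ω p → ℝ)
    (hmpos : ∀ p, 0 < m p)
    (hXmeas : ∀ p k, Measurable (X p k))
    (hindep : ∀ p, ProbabilityTheory.iIndepFun
      (X p) (μ p))
    (hcdf : ∀ p k x, ((μ p) {ω | X p k ω ≤ x}).toReal = G p x)
    (hC : 0 < C)
    (hG01 : ∀ p x, G p x ∈ Set.Icc (0:ℝ) 1)
    (hF01 : ∀ x, F x ∈ Set.Icc (0:ℝ) 1)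
    (hrate : ∀ p : ℕ, 1 ≤ p → ∀ x : ℝ, 0 ≤ x →
      |G p x - F x| ≤ C * (p : ℝ) ^ (-(2:ℝ)/3) * Real.exp (-x/2))
    (hm : Tendsto m atTop atTop)
    (hlimsup : IsBoundedUnder (· ≤ ·) atTop
      (fun p : ℕ => (m p : ℝ) / (p : ℝ) ^ ((2:ℝ)/3)))
    (ha : ∀ k : ℕ, 0 < a k)
    (hab : ∀ y : ℝ, Tendsto (fun p : ℕ => a (m p) * y + b (m p)) atTop atTop)
    (hF : ∀ y : ℝ, Tendsto (fun p : ℕ => (F (a (m p) * y + b (m p))) ^ (m p))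
      atTop (nhds (Real.exp (-Real.exp (-y))))) :
    ∀ y : ℝ, Tendsto (fun p : ℕ =>
        ((μ p) {ω |
          (Finset.univ.sup'
              (Finset.univ_nonempty_iff.mpr (Fin.pos_iff_nonempty.mp (hmpos p)))
              (fun k => X p k ω) - b (m p)) / a (m p) ≤ y}).toReal)
      atTop (nhds (Real.exp (-Real.exp (-y)))) := by
  intro y
  set x : ℕ → ℝ := fun p => a (m p) * y + b (m p) with hx
  -- Step 1: the probability equals (G p (x p)) ^ (m p)
  have key : ∀ p : ℕ, ((μ p) {ω |
          (Finset.univ.sup'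
              (Finset.univ_nonempty_iff.mpr (Fin.pos_iff_nonempty.mp (hmpos p)))
              (fun k => X p k ω) - b (m p)) / a (m p) ≤ y}).toReal
      = (G p (x p)) ^ (m p) := by
    intro p
    have hset : {ω |
          (Finset.univ.sup'
              (Finset.univ_nonempty_iff.mpr (Fin.pos_iff_nonempty.mp (hmpos p)))
              (fun k => X p k ω) - b (m p)) / a (m p) ≤ y}
        = ⋂ k : Fin (m p), X p k ⁻¹' Set.Iic (x p) := by
      ext ω
      simp only [Set.mem_setOf_eq, Set.mem_iInter, Set.mem_preimage, Set.mem_Iic]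
      rw [div_le_iff₀ (ha (m p)), sub_le_iff_le_add, Finset.sup'_le_iff]
      have hxp : x p = y * a (m p) + b (m p) := by simp only [hx]; ring
      constructor
      · intro h k; have := h k (Finset.mem_univ k); linarith [this, hxp]
      · intro h k _; linarith [h k, hxp]
    have hmeas : ∀ k : Fin (m p),
        MeasurableSet[Real.measurableSpace.comap (X p k)] (X p k ⁻¹' Set.Iic (x p)) :=
      fun k => ⟨Set.Iic (x p), measurableSet_Iic, rfl⟩
    have hprod := (hindep p).meas_iInter hmeas
    rw [hset, hprod]
    rw [ENNReal.toReal_prod]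
    have : ∀ k : Fin (m p), ((μ p) (X p k ⁻¹' Set.Iic (x p))).toReal = G p (x p) := by
      intro k
      have := hcdf p k (x p)
      exact this
    rw [Finset.prod_congr rfl (fun k _ => this k), Finset.prod_const, Finset.card_univ,
      Fintype.card_fin]
  simp only [key]
  -- Step 2: the difference (G^m - F^m) → 0
  obtain ⟨M, hM⟩ := hlimsup
  have hxtop : Tendsto x atTop atTop := hab y
  have hdiff : Tendsto (fun p => G p (x p) ^ (m p) - F (x p) ^ (m p)) atTop (nhds 0) := by
    have hbound : ∀ᶠ p : ℕ in atTop,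
        ‖G p (x p) ^ (m p) - F (x p) ^ (m p)‖ ≤ C * M * Real.exp (-(x p)/2) := by
      have h1 : ∀ᶠ p : ℕ in atTop, 1 ≤ p := eventually_ge_atTop 1
      have h2 : ∀ᶠ p : ℕ in atTop, 0 ≤ x p := hxtop.eventually_ge_atTop 0
      have h3 : ∀ᶠ p : ℕ in atTop, (m p : ℝ) / (p : ℝ) ^ ((2:ℝ)/3) ≤ M :=
        hM.mono (fun p hp => hp)
      filter_upwards [h1, h2, h3] with p hp1 hp2 hp3
      have hppos : (0:ℝ) < (p : ℝ) ^ ((2:ℝ)/3) :=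
        Real.rpow_pos_of_pos (by exact_mod_cast hp1) _
      calc ‖G p (x p) ^ (m p) - F (x p) ^ (m p)‖
          ≤ (m p : ℝ) * |G p (x p) - F (x p)| :=
            pow_abs_sub_le _ _ (hG01 p _) (hF01 _) (m p)
        _ ≤ (m p : ℝ) * (C * (p : ℝ) ^ (-(2:ℝ)/3) * Real.exp (-(x p)/2)) := by
            apply mul_le_mul_of_nonneg_left (hrate p hp1 (x p) hp2) (Nat.cast_nonneg _)
        _ = ((m p : ℝ) / (p : ℝ) ^ ((2:ℝ)/3)) * C * Real.exp (-(x p)/2) := by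
            rw [neg_div, Real.rpow_neg (Nat.cast_nonneg p) ((2:ℝ)/3)]
            · field_simp
        _ ≤ M * C * Real.exp (-(x p)/2) := by
            apply mul_le_mul_of_nonneg_right _ (Real.exp_nonneg _)
            exact mul_le_mul_of_nonneg_right hp3 hC.le
        _ = C * M * Real.exp (-(x p)/2) := by ring
    refine squeeze_zero_norm' hbound ?_
    have hexp : Tendsto (fun p => Real.exp (-(x p)/2)) atTop (nhds 0) := by
      apply Real.tendsto_exp_atBot.comp
      have hneg : Tendsto (fun p => -(x p)) atTop atBot := tendsto_neg_atBot_iff.mpr hxtop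
      simpa [div_eq_mul_inv] using hneg.atBot_mul_const (by norm_num : (0:ℝ) < 2⁻¹)
    simpa using (hexp.const_mul (C * M))
  have := (hF y).add hdiff
  simp only [add_zero] at this
  convert this using 2 with p
  ring
end
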